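/- Among all randomized classifiers with a fixed selection rate r on each group (hence satisfying Demographic Parity), the mass-threshold classifier T̃_r minimizes the 0-1 loss; moreover any such classifier f whose acceptance behavior differs from T̃_r on a set of positive probability has strictly larger loss. -/
import Mathlib


open Finset

/-- `P` is a probability distribution on `X × Z × Y` with `Z = Bool` (group, `true` = A,
`false` = D) and `Y = Bool` (label, `true` = 1). -/
def IsDist {X : Type*} [Fintype X] (P : X × Bool × Bool → ℝ) : Prop :=
  (∀ p, 0 ≤ P p) ∧ ∑ p : X × Bool × Bool, P p = 1

/-- mass of the feature-group cell `(x, z)`. -/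
noncomputable def cellMass {X : Type*} (P : X × Bool × Bool → ℝ) (x : X) (z : Bool) : ℝ :=
  P (x, z, false) + P (x, z, true)

/-- total mass of group `z`. -/
noncomputable def gMass {X : Type*} [Fintype X] (P : X × Bool × Bool → ℝ) (z : Bool) : ℝ :=
  ∑ x, cellMass P x z

/-- score of the cell `(x, z)`: `Pr[Y = 1 | X = x, Z = z]`. -/
noncomputable def score {X : Type*} (P : X × Bool × Bool → ℝ) (x : X) (z : Bool) : ℝ :=
  P (x, z, true) / cellMass P x z

/-- A randomized classifier takes values in `[0,1]`. -/
def InUnit {X : Type*} (f : X × Bool → ℝ) : Prop := ∀ p, f p ∈ Set.Icc (0 : ℝ) 1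

/-- selection rate of randomized classifier `f` on group `z`: `E[f(X,Z) | Z = z]`. -/
noncomputable def selRate {X : Type*} [Fintype X] (P : X × Bool × Bool → ℝ) (f : X × Bool → ℝ)
    (z : Bool) : ℝ :=
  (∑ x, f (x, z) * cellMass P x z) / gMass P z

/-- 0-1 loss of randomized classifier `f` under `P`. -/
noncomputable def loss {X : Type*} [Fintype X] (P : X × Bool × Bool → ℝ) (f : X × Bool → ℝ) : ℝ :=
  ∑ x, ∑ z, (P (x, z, true) * (1 - f (x, z)) + P (x, z, false) * f (x, z))

/-- Demographic parity: equal selection rates on the two groups. -/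
def DP {X : Type*} [Fintype X] (P : X × Bool × Bool → ℝ) (f : X × Bool → ℝ) : Prop :=
  selRate P f true = selRate P f false

/-- false positive rate of `f` on group `z`: `E[f(X,Z) | Y = 0, Z = z]`. -/
noncomputable def fpr {X : Type*} [Fintype X] (P : X × Bool × Bool → ℝ) (f : X × Bool → ℝ)
    (z : Bool) : ℝ :=
  (∑ x, f (x, z) * P (x, z, false)) / (∑ x, P (x, z, false))

/-- `f` is a (group-wise) mass-threshold classifier: within each group it accepts a
prefix of the cells sorted in decreasing order of score (fractionally at the boundary). -/
def IsPrefix {X : Type*} (P : X × Bool × Bool → ℝ) (f : X × Bool → ℝ) : Prop :=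
  ∀ z x x', 0 < cellMass P x z → 0 < cellMass P x' z →
    score P x' z < score P x z → 0 < f (x', z) → f (x, z) = 1

/-- cells of equal score within a group have been merged, i.e. scores of distinct
positive-mass cells within a group are distinct ("strictly decreasing" when sorted). -/
def MergedScores {X : Type*} (P : X × Bool × Bool → ℝ) : Prop :=
  ∀ z x x', 0 < cellMass P x z → 0 < cellMass P x' z → score P x z = score P x' z → x = x'

lemma mass_zero {X : Type*} (P : X × Bool × Bool → ℝ) (hP0 : ∀ p, 0 ≤ P p) (x : X) (z : Bool)
    (h : ¬ 0 < cellMass P x z) : P (x, z, true) = 0 ∧ P (x, z, false) = 0 := by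
  have h0 := hP0 (x, z, false); have h1 := hP0 (x, z, true)
  unfold cellMass at h
  constructor <;> linarith

lemma group_key {X : Type*} [Fintype X] (P : X × Bool × Bool → ℝ) (hP0 : ∀ p, 0 ≤ P p)
    (hm : MergedScores P) (f g : X × Bool → ℝ) (hf1 : InUnit f) (hg1 : InUnit g)
    (hf2 : IsPrefix P f) (z : Bool)
    (hsel : ∑ x, f (x, z) * cellMass P x z = ∑ x, g (x, z) * cellMass P x z) :
    0 ≤ ∑ x, (f (x, z) - g (x, z)) * (P (x, z, true) - P (x, z, false)) ∧
    ((∃ x, 0 < cellMass P x z ∧ f (x, z) ≠ g (x, z)) →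
      0 < ∑ x, (f (x, z) - g (x, z)) * (P (x, z, true) - P (x, z, false))) := by
  classical
  set T : Finset X := univ.filter (fun x => 0 < cellMass P x z) with hTdef
  have hmemT : ∀ x, x ∈ T ↔ 0 < cellMass P x z := by
    intro x; simp [hTdef]
  -- restrict the main sum to T
  have hrestr : ∑ x, (f (x, z) - g (x, z)) * (P (x, z, true) - P (x, z, false))
      = ∑ x ∈ T, (f (x, z) - g (x, z)) * (P (x, z, true) - P (x, z, false)) := by
    refine (Finset.sum_subset (Finset.subset_univ T) ?_).symm
    intro x _ hx
    obtain ⟨h1, h0⟩ := mass_zero P hP0 x z (by simpa [hmemT] using hx)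
    simp [h1, h0]
  rw [hrestr]
  -- restricted selection constraint
  have hsel' : ∑ x ∈ T, (f (x, z) - g (x, z)) * cellMass P x z = 0 := by
    have : ∑ x ∈ T, (f (x, z) - g (x, z)) * cellMass P x z
        = ∑ x, (f (x, z) - g (x, z)) * cellMass P x z := by
      refine Finset.sum_subset (Finset.subset_univ T) ?_
      intro x _ hx
      obtain ⟨h1, h0⟩ := mass_zero P hP0 x z (by simpa [hmemT] using hx)
      simp [cellMass, h1, h0]
    rw [this]
    simp only [sub_mul, Finset.sum_sub_distrib, hsel, sub_self]
  by_cases hTne : T.Nonempty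
  · -- define the threshold t
    set S : Finset X := T.filter (fun x => f (x, z) < 1) with hSdef
    set t : ℝ := if hS : S.Nonempty then (S.image (fun x => score P x z)).max' (hS.image _)
      else T.inf' hTne (fun x => score P x z) - 1 with htdef
    have hA : ∀ x ∈ T, t < score P x z → f (x, z) = 1 := by
      intro x hx hlt
      by_contra hne
      have hflt : f (x, z) < 1 := lt_of_le_of_ne (hf1 (x, z)).2 hne
      have hxS : x ∈ S := by simp [hSdef, hx, hflt]
      have hS : S.Nonempty := ⟨x, hxS⟩
      have : score P x z ≤ t := by
        rw [htdef, dif_pos hS]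
        exact Finset.le_max' (S.image (fun x => score P x z)) _
          (Finset.mem_image_of_mem _ hxS)
      linarith
    have hB : ∀ x ∈ T, score P x z < t → f (x, z) = 0 := by
      intro x hx hlt
      by_cases hS : S.Nonempty
      · have htmax : t = (S.image (fun x => score P x z)).max' (hS.image _) := by
          rw [htdef, dif_pos hS]
        have hmem : t ∈ S.image (fun x => score P x z) := by
          rw [htmax]; exact Finset.max'_mem _ _
        obtain ⟨x0, hx0S, hx0t⟩ := Finset.mem_image.mp hmem
        have hx0T : x0 ∈ T := Finset.mem_of_mem_filter _ hx0S
        have hx0lt : f (x0, z) < 1 := (Finset.mem_filter.mp hx0S).2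
        have hfx : ¬ 0 < f (x, z) := by
          intro hpos
          have := hf2 z x0 x ((hmemT x0).mp hx0T) ((hmemT x).mp hx) (by rw [hx0t]; exact hlt) hpos
          linarith
        exact le_antisymm (not_lt.mp hfx) (hf1 (x, z)).1
      · exfalso
        have : t = T.inf' hTne (fun x => score P x z) - 1 := by rw [htdef, dif_neg hS]
        have hle : T.inf' hTne (fun x => score P x z) ≤ score P x z := Finset.inf'_le _ hx
        linarith
    -- boundary uniqueness
    have hC : ∀ x ∈ T, ∀ x' ∈ T, score P x z = t → score P x' z = t → x = x' := by
      intro x hx x' hx' h1 h2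
      exact hm z x x' ((hmemT x).mp hx) ((hmemT x').mp hx') (by rw [h1, h2])
    -- rewrite the sum
    have hscore : ∀ x ∈ T, score P x z * cellMass P x z = P (x, z, true) := by
      intro x hx
      have : cellMass P x z ≠ 0 := ne_of_gt ((hmemT x).mp hx)
      rw [score, div_mul_cancel₀ _ this]
    have hE : ∑ x ∈ T, (f (x, z) - g (x, z)) * (P (x, z, true) - P (x, z, false))
        = 2 * ∑ x ∈ T, (f (x, z) - g (x, z)) * cellMass P x z * (score P x z - t) := by
      have : ∑ x ∈ T, (f (x, z) - g (x, z)) * (P (x, z, true) - P (x, z, false))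
          = ∑ x ∈ T, (2 * ((f (x, z) - g (x, z)) * cellMass P x z * (score P x z - t))
              + (2 * t - 1) * ((f (x, z) - g (x, z)) * cellMass P x z)) := by
        refine Finset.sum_congr rfl fun x hx => ?_
        have h1 := hscore x hx
        have h2 : cellMass P x z = P (x, z, false) + P (x, z, true) := rfl
        linear_combination (-2 * (f (x, z) - g (x, z))) * h1 + (f (x, z) - g (x, z)) * h2
      rw [this, Finset.sum_add_distrib, ← Finset.mul_sum, ← Finset.mul_sum, hsel']
      ring
    rw [hE]
    -- each term is nonnegative
    have hterm : ∀ x ∈ T, 0 ≤ (f (x, z) - g (x, z)) * cellMass P x z * (score P x z - t) := by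
      intro x hx
      have hmass := (hmemT x).mp hx
      have hg0 := (hg1 (x, z)).1
      have hg1' := (hg1 (x, z)).2
      rcases lt_trichotomy (score P x z) t with h | h | h
      · have hf0 := hB x hx h
        rw [hf0]
        have heq : (0 - g (x, z)) * cellMass P x z * (score P x z - t)
            = g (x, z) * (cellMass P x z * (t - score P x z)) := by ring
        rw [heq]
        exact mul_nonneg hg0 (mul_nonneg hmass.le (by linarith))
      · rw [h]; simp
      · have hf1' := hA x hx h
        rw [hf1']
        exact mul_nonneg (mul_nonneg (by linarith) hmass.le) (by linarith)
    have hstrict : ∀ x ∈ T, f (x, z) ≠ g (x, z) → score P x z ≠ t →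
        0 < (f (x, z) - g (x, z)) * cellMass P x z * (score P x z - t) := by
      intro x hx hne hst
      have hmass := (hmemT x).mp hx
      have hg0 := (hg1 (x, z)).1
      have hg1' := (hg1 (x, z)).2
      rcases lt_trichotomy (score P x z) t with h | h | h
      · have hf0 := hB x hx h
        have : 0 < g (x, z) := lt_of_le_of_ne hg0 (by rw [← hf0]; exact hne)
        rw [hf0]
        have heq : (0 - g (x, z)) * cellMass P x z * (score P x z - t)
            = g (x, z) * (cellMass P x z * (t - score P x z)) := by ring
        rw [heq]
        exact mul_pos this (mul_pos hmass (by linarith))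
      · exact absurd h hst
      · have hfone := hA x hx h
        have : g (x, z) < 1 := lt_of_le_of_ne hg1' (by rw [← hfone]; exact fun e => hne e.symm)
        rw [hfone]
        exact mul_pos (mul_pos (by linarith) hmass) (by linarith)
    constructor
    · have := Finset.sum_nonneg hterm
      linarith
    · rintro ⟨x, hxm, hxne⟩
      have hxT : x ∈ T := (hmemT x).mpr hxm
      have key : ∃ x' ∈ T, f (x', z) ≠ g (x', z) ∧ score P x' z ≠ t := by
        by_cases hst : score P x z = t
        · -- find another differing cell
          have : ∃ x' ∈ T, x' ≠ x ∧ f (x', z) ≠ g (x', z) := by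
            by_contra hcon
            push_neg at hcon
            have : ∑ x' ∈ T, (f (x', z) - g (x', z)) * cellMass P x' z
                = (f (x, z) - g (x, z)) * cellMass P x z := by
              refine Finset.sum_eq_single x ?_ ?_
              · intro x' hx' hne'
                rw [hcon x' hx' hne', sub_self, zero_mul]
              · intro h; exact absurd hxT h
            rw [hsel'] at this
            have := this.symm
            have hne0 : f (x, z) - g (x, z) ≠ 0 := sub_ne_zero_of_ne hxne
            rcases mul_eq_zero.mp this with h | h
            · exact hne0 h
            · exact (ne_of_gt hxm) h
          obtain ⟨x', hx'T, hx'ne, hx'fg⟩ := this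
          refine ⟨x', hx'T, hx'fg, ?_⟩
          intro hst'
          exact hx'ne (hC x' hx'T x hxT hst' hst)
        · exact ⟨x, hxT, hxne, hst⟩
      obtain ⟨x', hx'T, h1, h2⟩ := key
      have hpos : 0 < ∑ x ∈ T, (f (x, z) - g (x, z)) * cellMass P x z * (score P x z - t) :=
        Finset.sum_pos' hterm ⟨x', hx'T, hstrict x' hx'T h1 h2⟩
      linarith
  · -- T empty
    have hTe : T = ∅ := Finset.not_nonempty_iff_eq_empty.mp hTne
    rw [hTe]
    simp only [Finset.sum_empty, le_refl, true_and]
    rintro ⟨x, hxm, _⟩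
    exact absurd ((hmemT x).mpr hxm) (by rw [hTe]; exact Finset.notMem_empty x)

/-- Among randomized classifiers with selection rate `r` on each group, the
mass-threshold classifier minimizes the 0-1 loss; any competitor differing from it on a
positive-mass point has strictly larger loss. -/
theorem stmt3 {X : Type*} [Fintype X] (P : X × Bool × Bool → ℝ) (hP : IsDist P)
    (hg : ∀ z, 0 < gMass P z) (hm : MergedScores P)
    (r : ℝ) (hr : r ∈ Set.Icc (0 : ℝ) 1)
    (f : X × Bool → ℝ) (hf1 : InUnit f) (hf2 : IsPrefix P f)
    (hf3 : ∀ z, selRate P f z = r)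
    (g : X × Bool → ℝ) (hg1 : InUnit g) (hg3 : ∀ z, selRate P g z = r) :
    loss P f ≤ loss P g ∧
      ((∃ x z, 0 < cellMass P x z ∧ f (x, z) ≠ g (x, z)) → loss P f < loss P g) := by
  classical
  have hP0 := hP.1
  -- equal numerators of selection rates
  have hnum : ∀ z, ∑ x, f (x, z) * cellMass P x z = ∑ x, g (x, z) * cellMass P x z := by
    intro z
    have h := (hf3 z).trans (hg3 z).symm
    unfold selRate at h
    have hgne : gMass P z ≠ 0 := ne_of_gt (hg z)
    field_simp at h
    exact h
  have hG := fun z => group_key P hP0 hm f g hf1 hg1 hf2 z (hnum z)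
  have hdiff : loss P g - loss P f
      = ∑ z : Bool, ∑ x, (f (x, z) - g (x, z)) * (P (x, z, true) - P (x, z, false)) := by
    unfold loss
    rw [← Finset.sum_sub_distrib, Finset.sum_comm]
    refine Finset.sum_congr rfl fun z _ => ?_
    rw [← Finset.sum_sub_distrib]
    exact Finset.sum_congr rfl fun x _ => by ring
  constructor
  · have : 0 ≤ loss P g - loss P f := by
      rw [hdiff]
      exact Finset.sum_nonneg fun z _ => (hG z).1
    linarith
  · rintro ⟨x, z, hxm, hxne⟩
    have : 0 < loss P g - loss P f := by
      rw [hdiff]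
      exact Finset.sum_pos' (fun z _ => (hG z).1)
        ⟨z, Finset.mem_univ z, (hG z).2 ⟨x, hxm, hxne⟩⟩
    linarith
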